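/- Let p be an odd prime. Suppose there exists a prime θ satisfying Condition N-C for p and Condition p-N-p for p. Then for all pairwise coprime nonzero integers x, y, z with x^p + y^p = z^p, p^2 divides one of x, y, z. (Sophie Germain's Theorem.) -/

import Mathlib

open Finset

/-- The cofactor `F p X Y = ∑ (-1)^i X^(p-1-i) Y^i` with `(X+Y) * F = X^p + Y^p`. -/
private def sgF (p : ℕ) (X Y : ℤ) : ℤ :=
  ∑ i ∈ Finset.range p, (-1) ^ i * X ^ (p - 1 - i) * Y ^ i

private lemma sgF_mul {p : ℕ} (hodd : Odd p) (X Y : ℤ) :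
    (X + Y) * sgF p X Y = X ^ p + Y ^ p := by
  have h : ∀ i ∈ Finset.range p, (X + Y) * ((-1) ^ i * X ^ (p - 1 - i) * Y ^ i)
      = (fun i => (-1 : ℤ) ^ i * X ^ (p - i) * Y ^ i) i
        - (fun i => (-1 : ℤ) ^ i * X ^ (p - i) * Y ^ i) (i + 1) := by
    intro i hi
    rw [Finset.mem_range] at hi
    have h1 : p - i = (p - 1 - i) + 1 := by omega
    have h2 : p - (i + 1) = p - 1 - i := by omega
    simp only [h1, h2, pow_succ]
    ring
  rw [sgF, Finset.mul_sum, Finset.sum_congr rfl h, Finset.sum_range_sub']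
  simp [hodd.neg_one_pow]

private lemma sgF_sub_dvd (p : ℕ) (X Y : ℤ) :
    (X + Y) ∣ sgF p X Y - (p : ℤ) * X ^ (p - 1) := by
  have hconst : ((p : ℤ)) * X ^ (p - 1)
      = ∑ i ∈ Finset.range p, (-1) ^ i * X ^ (p - 1 - i) * (-X) ^ i := by
    have hterm : ∀ i ∈ Finset.range p,
        (-1 : ℤ) ^ i * X ^ (p - 1 - i) * (-X) ^ i = X ^ (p - 1) := by
      intro i hi
      rw [Finset.mem_range] at hi
      have h1 : (p - 1 - i) + i = p - 1 := by omega
      have h2 : (-1 : ℤ) ^ i * X ^ (p - 1 - i) * (-X) ^ i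
          = ((-1 : ℤ) * (-1)) ^ i * (X ^ (p - 1 - i) * X ^ i) := by
        rw [neg_pow X i, mul_pow]; ring
      rw [h2, ← pow_add, h1]
      norm_num
    rw [Finset.sum_congr rfl hterm, Finset.sum_const, Finset.card_range, nsmul_eq_mul]
  rw [sgF, hconst, ← Finset.sum_sub_distrib]
  refine Finset.dvd_sum (fun i _ => ?_)
  have : (-1 : ℤ) ^ i * X ^ (p - 1 - i) * Y ^ i - (-1) ^ i * X ^ (p - 1 - i) * (-X) ^ i
      = (-1) ^ i * X ^ (p - 1 - i) * (Y ^ i - (-X) ^ i) := by ring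
  rw [this]
  refine Dvd.dvd.mul_left ?_ _
  have := sub_dvd_pow_sub_pow Y (-X) i
  have h2 : Y - -X = X + Y := by ring
  rwa [h2] at this

private lemma not_dvd_of_coprime {q : ℕ} (hq : q.Prime) {a b : ℤ} (h : IsCoprime a b)
    (hqb : (q : ℤ) ∣ b) : ¬ (q : ℤ) ∣ a := by
  intro hqa
  have hu := h.isUnit_of_dvd' hqa hqb
  rw [Int.isUnit_iff] at hu
  have := hq.two_le
  rcases hu with h1 | h1 <;> omega

private lemma sgF_coprime {p : ℕ} (hp : p.Prime) {U V W : ℤ} (hW : W ≠ 0)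
    (hpW : ¬ (p : ℤ) ∣ W) (hUV : IsCoprime U V)
    (heq : (U + V) * sgF p U V = W ^ p) :
    IsCoprime (U + V) (sgF p U V) := by
  rw [Int.isCoprime_iff_gcd_eq_one]
  by_contra hg
  obtain ⟨q, hq, hqd⟩ := Nat.exists_prime_and_dvd hg
  have hq1 : (q : ℤ) ∣ U + V := dvd_trans (Int.natCast_dvd_natCast.mpr hqd) (Int.gcd_dvd_left _ _)
  have hq2 : (q : ℤ) ∣ sgF p U V := dvd_trans (Int.natCast_dvd_natCast.mpr hqd) (Int.gcd_dvd_right _ _)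
  have hqprime : Prime (q : ℤ) := Nat.prime_iff_prime_int.mp hq
  have hqW : (q : ℤ) ∣ W := by
    have : (q : ℤ) ∣ W ^ p := heq ▸ Dvd.dvd.mul_right hq1 _
    exact hqprime.dvd_of_dvd_pow this
  have hqpU : (q : ℤ) ∣ (p : ℤ) * U ^ (p - 1) := by
    have h1 := sgF_sub_dvd p U V
    have h2 : (q : ℤ) ∣ sgF p U V - (p : ℤ) * U ^ (p - 1) := dvd_trans hq1 h1
    have := dvd_sub hq2 h2
    simpa using this
  rcases hqprime.dvd_mul.mp hqpU with h1 | h1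
  · have : q = p := (Nat.prime_dvd_prime_iff_eq hq hp).mp (Int.natCast_dvd_natCast.mp h1)
    subst this
    exact hpW hqW
  · have hqU : (q : ℤ) ∣ U := hqprime.dvd_of_dvd_pow h1
    have hqV : (q : ℤ) ∣ V := (dvd_add_right hqU).mp hq1
    exact not_dvd_of_coprime hq hUV hqV hqU

private lemma pth_power_extract {p : ℕ} (hodd : Odd p) {a b c : ℤ} (hab : IsCoprime a b)
    (h : a * b = c ^ p) : ∃ d : ℤ, a = d ^ p := by
  obtain ⟨d, u, hu⟩ := exists_associated_pow_of_mul_eq_pow' hab h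
  rcases Int.units_eq_one_or u with h1 | h1
  · exact ⟨d, by rw [← hu, h1]; simp⟩
  · refine ⟨-d, ?_⟩
    rw [← hu, h1, hodd.neg_pow]
    simp

/-- In case `p` divides none of `X, Y, Z` and `θ ∣ Z`, get a contradiction. -/
private lemma claim1_aux (p θ : ℕ) (hp : p.Prime) (hodd : Odd p) [Fact θ.Prime]
    (hNC' : ∀ u v : ZMod θ, u ≠ 0 → v ≠ 0 → v ^ p ≠ u ^ p + 1)
    (hpNp' : ∀ w : ZMod θ, w ^ p ≠ (p : ZMod θ))
    (X Y Z : ℤ) (hX : X ≠ 0) (hY : Y ≠ 0) (hZ : Z ≠ 0)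
    (hXY : IsCoprime X Y) (hYZ : IsCoprime Y Z) (hXZ : IsCoprime X Z)
    (heq : X ^ p + Y ^ p + Z ^ p = 0)
    (hpX : ¬ (p : ℤ) ∣ X) (hpY : ¬ (p : ℤ) ∣ Y) (hpZ : ¬ (p : ℤ) ∣ Z)
    (hθZ : (θ : ℤ) ∣ Z) : False := by
  have hθ := (Fact.out : θ.Prime)
  -- θ does not divide X, Y
  have hθX : ¬ (θ : ℤ) ∣ X := not_dvd_of_coprime hθ hXZ hθZ
  have hθY : ¬ (θ : ℤ) ∣ Y := not_dvd_of_coprime hθ hYZ hθZ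
  -- factorization equations
  have heqXY : (X + Y) * sgF p X Y = (-Z) ^ p := by
    rw [sgF_mul hodd, hodd.neg_pow]; linarith
  have heqYZ : (Y + Z) * sgF p Y Z = (-X) ^ p := by
    rw [sgF_mul hodd, hodd.neg_pow]; linarith
  have heqXZ : (X + Z) * sgF p X Z = (-Y) ^ p := by
    rw [sgF_mul hodd, hodd.neg_pow]; linarith
  have hcopXY := sgF_coprime hp (neg_ne_zero.mpr hZ) (by rwa [dvd_neg]) hXY heqXY
  have hcopYZ := sgF_coprime hp (neg_ne_zero.mpr hX) (by rwa [dvd_neg]) hYZ heqYZ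
  have hcopXZ := sgF_coprime hp (neg_ne_zero.mpr hY) (by rwa [dvd_neg]) hXZ heqXZ
  obtain ⟨a, ha⟩ := pth_power_extract hodd hcopXY heqXY
  obtain ⟨α, hα⟩ := pth_power_extract hodd hcopXY.symm (by rwa [mul_comm] at heqXY)
  obtain ⟨b, hb⟩ := pth_power_extract hodd hcopYZ heqYZ
  obtain ⟨c, hc⟩ := pth_power_extract hodd hcopXZ heqXZ
  -- move to ZMod θ
  have hZ0 : ((Z : ZMod θ)) = 0 := (ZMod.intCast_zmod_eq_zero_iff_dvd Z θ).mpr hθZ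
  have hX0 : ((X : ZMod θ)) ≠ 0 := fun h => hθX ((ZMod.intCast_zmod_eq_zero_iff_dvd X θ).mp h)
  have hY0 : ((Y : ZMod θ)) ≠ 0 := fun h => hθY ((ZMod.intCast_zmod_eq_zero_iff_dvd Y θ).mp h)
  have hbp : ((b : ZMod θ)) ^ p = (Y : ZMod θ) := by
    have : ((Y + Z : ℤ) : ZMod θ) = ((b ^ p : ℤ) : ZMod θ) := by rw [hb]
    push_cast at this
    rw [hZ0] at this
    simpa using this.symm
  have hcp : ((c : ZMod θ)) ^ p = (X : ZMod θ) := by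
    have : ((X + Z : ℤ) : ZMod θ) = ((c ^ p : ℤ) : ZMod θ) := by rw [hc]
    push_cast at this
    rw [hZ0] at this
    simpa using this.symm
  have hap : ((a : ZMod θ)) ^ p = (X : ZMod θ) + (Y : ZMod θ) := by
    have : ((X + Y : ℤ) : ZMod θ) = ((a ^ p : ℤ) : ZMod θ) := by rw [ha]
    push_cast at this
    exact this.symm
  have hb0 : ((b : ZMod θ)) ≠ 0 := fun h => hY0 (by rw [← hbp, h, zero_pow hp.ne_zero])
  have hc0 : ((c : ZMod θ)) ≠ 0 := fun h => hX0 (by rw [← hcp, h, zero_pow hp.ne_zero])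
  -- key relation: a^p = b^p + c^p  (mod θ), since b^p + c^p - a^p = 2Z
  have hkey : ((a : ZMod θ)) ^ p = ((b : ZMod θ)) ^ p + ((c : ZMod θ)) ^ p := by
    rw [hap, hbp, hcp]; ring
  -- θ divides a
  have ha0 : ((a : ZMod θ)) = 0 := by
    by_contra ha0
    apply hNC' ((b : ZMod θ) / (c : ZMod θ)) ((a : ZMod θ) / (c : ZMod θ))
      (div_ne_zero hb0 hc0) (div_ne_zero ha0 hc0)
    rw [div_pow, div_pow, hkey]
    field_simp
  -- then X ≡ -Y mod θ, and sgF p X Y ≡ p * X^(p-1) mod θ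
  have hXY0 : (X : ZMod θ) + (Y : ZMod θ) = 0 := by
    rw [← hap, ha0, zero_pow hp.ne_zero]
  have hθdXY : (θ : ℤ) ∣ X + Y := by
    rw [← ZMod.intCast_zmod_eq_zero_iff_dvd]
    push_cast
    exact hXY0
  have hsgF : ((α : ZMod θ)) ^ p = (p : ZMod θ) * (X : ZMod θ) ^ (p - 1) := by
    have hd : (θ : ℤ) ∣ sgF p X Y - (p : ℤ) * X ^ (p - 1) :=
      dvd_trans hθdXY (sgF_sub_dvd p X Y)
    have : ((sgF p X Y - (p : ℤ) * X ^ (p - 1) : ℤ) : ZMod θ) = 0 :=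
      (ZMod.intCast_zmod_eq_zero_iff_dvd _ θ).mpr hd
    rw [hα] at this
    push_cast at this
    rw [sub_eq_zero] at this
    exact this
  -- derive that p is a p-th power mod θ: contradiction
  apply hpNp' ((α : ZMod θ) / ((c : ZMod θ)) ^ (p - 1))
  rw [div_pow, hsgF, ← hcp]
  rw [← pow_mul, ← pow_mul, Nat.mul_comm p (p-1)]
  field_simp

/-- If `p ∣ Z` then in fact `p ^ 2 ∣ Z`. -/
private lemma claim2 (p : ℕ) (hp : p.Prime) (hodd : Odd p)
    (X Y Z : ℤ) (hX : X ≠ 0) (hY : Y ≠ 0) (hZ : Z ≠ 0)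
    (hXY : IsCoprime X Y) (hYZ : IsCoprime Y Z) (hXZ : IsCoprime X Z)
    (heq : X ^ p + Y ^ p + Z ^ p = 0) (hpZ : (p : ℤ) ∣ Z) : (p : ℤ) ^ 2 ∣ Z := by
  haveI : Fact p.Prime := ⟨hp⟩
  have hp3 : 3 ≤ p := by
    have h2 := hp.two_le
    have hne : p ≠ 2 := by rintro rfl; exact (by decide : ¬ Odd 2) hodd
    omega
  have hpX : ¬ (p : ℤ) ∣ X := not_dvd_of_coprime hp hXZ hpZ
  have hpY : ¬ (p : ℤ) ∣ Y := not_dvd_of_coprime hp hYZ hpZ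
  -- factorizations X + Z = c^p, Y + Z = b^p
  have heqYZ : (Y + Z) * sgF p Y Z = (-X) ^ p := by
    rw [sgF_mul hodd, hodd.neg_pow]; linarith
  have heqXZ : (X + Z) * sgF p X Z = (-Y) ^ p := by
    rw [sgF_mul hodd, hodd.neg_pow]; linarith
  obtain ⟨b, hb⟩ := pth_power_extract hodd
    (sgF_coprime hp (neg_ne_zero.mpr hX) (by rwa [dvd_neg]) hYZ heqYZ) heqYZ
  obtain ⟨c, hc⟩ := pth_power_extract hodd
    (sgF_coprime hp (neg_ne_zero.mpr hY) (by rwa [dvd_neg]) hXZ heqXZ) heqXZ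
  -- p ∣ X + Y
  have hZ0 : ((Z : ZMod p)) = 0 := (ZMod.intCast_zmod_eq_zero_iff_dvd Z p).mpr hpZ
  have hpXY : (p : ℤ) ∣ X + Y := by
    rw [← ZMod.intCast_zmod_eq_zero_iff_dvd]
    have hcast : ((X ^ p + Y ^ p + Z ^ p : ℤ) : ZMod p) = 0 := by rw [heq]; simp
    push_cast at hcast
    rw [ZMod.pow_card, ZMod.pow_card, ZMod.pow_card, hZ0] at hcast
    push_cast
    simpa using hcast
  obtain ⟨m, hm⟩ := hpXY
  have hpXY' : (p : ℤ) ∣ X + Y := ⟨m, by rw [← hm]⟩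
  -- binomial expansion: X^p + Y^p = p*(X+Y)*X^(p-1) + (X+Y)^2 * T  with p ∣ T
  set s : ℤ := X + Y with hs
  set T : ℤ := ∑ j ∈ Finset.range (p - 1),
      s ^ j * (-X) ^ (p - (j + 2)) * (Nat.choose p (j + 2) : ℤ) with hT
  have hbin : X ^ p + Y ^ p = (p : ℤ) * s * X ^ (p - 1) + s ^ 2 * T := by
    have hY' : Y = s + (-X) := by rw [hs]; ring
    have hexp := add_pow s (-X) p
    have hpeel : ∑ k ∈ Finset.range (p + 1), s ^ k * (-X) ^ (p - k) * (Nat.choose p k : ℤ)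
        = (∑ j ∈ Finset.range (p - 1),
            s ^ (j + 2) * (-X) ^ (p - (j + 2)) * (Nat.choose p (j + 2) : ℤ))
          + s ^ 1 * (-X) ^ (p - 1) * (Nat.choose p 1 : ℤ)
          + s ^ 0 * (-X) ^ (p - 0) * (Nat.choose p 0 : ℤ) := by
      rw [Finset.sum_range_succ']
      congr 1
      have hp1 : p = (p - 1) + 1 := by omega
      rw [hp1]
      rw [Finset.sum_range_succ']
      norm_num
    have hev : (-X) ^ (p - 1) = X ^ (p - 1) := by
      have : Even (p - 1) := Nat.Odd.sub_odd hodd odd_one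
      exact this.neg_pow X
    have hodd' : (-X) ^ (p - 0) = -X ^ p := by
      rw [Nat.sub_zero, hodd.neg_pow]
    have hstep : Y ^ p = (∑ j ∈ Finset.range (p - 1),
            s ^ (j + 2) * (-X) ^ (p - (j + 2)) * (Nat.choose p (j + 2) : ℤ))
          + s * X ^ (p - 1) * (p : ℤ) - X ^ p := by
      rw [hY', hexp, hpeel, hev, hodd']
      simp [Nat.choose_one_right]
      ring
    have hsum : ∑ j ∈ Finset.range (p - 1),
        s ^ (j + 2) * (-X) ^ (p - (j + 2)) * (Nat.choose p (j + 2) : ℤ) = s ^ 2 * T := by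
      rw [hT, Finset.mul_sum]
      exact Finset.sum_congr rfl (fun j _ => by ring)
    rw [hstep, hsum]
    ring
  have hpT : (p : ℤ) ∣ T := by
    refine Finset.dvd_sum (fun j hj => ?_)
    rw [Finset.mem_range] at hj
    rcases Nat.lt_or_ge (j + 2) p with hlt | hge
    · exact Dvd.dvd.mul_left
        (Int.natCast_dvd_natCast.mpr (hp.dvd_choose_self (by omega) hlt)) _
    · -- j + 2 = p, so j ≥ 1 and s^j is divisible by p
      have hj2 : j + 2 = p := by omega
      have hj1 : 1 ≤ j := by omega
      refine Dvd.dvd.mul_right (Dvd.dvd.mul_right ?_ _) _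
      calc (p : ℤ) ∣ s := hpXY'
        _ ∣ s ^ j := dvd_pow_self s (by omega)
  -- p^3 divides X^p + Y^p
  have hp3dvd : (p : ℤ) ^ 3 ∣ X ^ p + Y ^ p := by
    have h1 : X ^ p + Y ^ p = -Z ^ p := by linarith
    obtain ⟨W, hW⟩ := hpZ
    rw [h1, hW, dvd_neg, mul_pow]
    exact Dvd.dvd.mul_right (pow_dvd_pow _ (by omega)) _
  -- deduce p ∣ m, hence p^2 ∣ X + Y... then p^2 | Z
  have hfactor : X ^ p + Y ^ p = (p : ℤ) ^ 2 * (m * X ^ (p - 1) + m ^ 2 * T) := by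
    rw [hbin, hm]; ring
  have hpm : (p : ℤ) ∣ m * X ^ (p - 1) + m ^ 2 * T := by
    have h2 : (p : ℤ) ^ 3 = (p : ℤ) ^ 2 * (p : ℤ) := by ring
    have h3 : (p : ℤ) ^ 2 * (p : ℤ) ∣ (p : ℤ) ^ 2 * (m * X ^ (p - 1) + m ^ 2 * T) := by
      rw [← h2, ← hfactor]; exact hp3dvd
    have hpne : ((p : ℤ)) ^ 2 ≠ 0 := pow_ne_zero 2 (by exact_mod_cast hp.ne_zero)
    exact (mul_dvd_mul_iff_left hpne).mp h3
  have hpm2 : (p : ℤ) ∣ m * X ^ (p - 1) := by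
    have := dvd_sub hpm (Dvd.dvd.mul_left hpT (m ^ 2))
    simpa using this
  have hppm : (p : ℤ) ∣ m := by
    have hpprime : Prime ((p : ℤ)) := Nat.prime_iff_prime_int.mp hp
    rcases hpprime.dvd_mul.mp hpm2 with h | h
    · exact h
    · exact absurd (hpprime.dvd_of_dvd_pow h) hpX
  have hp2s : (p : ℤ) ^ 2 ∣ s := by
    obtain ⟨m', hm'⟩ := hppm
    exact ⟨m', by rw [hm, hm']; ring⟩
  -- p ∣ b + c
  have hpbc' : (p : ℤ) ∣ b ^ p + c ^ p := by
    have h1 : b ^ p + c ^ p = s + 2 * Z := by rw [← hb, ← hc, hs]; ring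
    rw [h1]
    exact dvd_add hpXY' (Dvd.dvd.mul_left hpZ 2)
  have hpbc : (p : ℤ) ∣ b + c := by
    rw [← ZMod.intCast_zmod_eq_zero_iff_dvd]
    have hcast : ((b ^ p + c ^ p : ℤ) : ZMod p) = 0 :=
      (ZMod.intCast_zmod_eq_zero_iff_dvd _ p).mpr hpbc'
    push_cast at hcast
    rw [ZMod.pow_card, ZMod.pow_card] at hcast
    push_cast
    exact hcast
  -- p^2 ∣ b^p + c^p
  have hp2bc : (p : ℤ) ^ 2 ∣ b ^ p + c ^ p := by
    have h1 : (p : ℤ) ∣ b - (-c) := by simpa [sub_neg_eq_add] using hpbc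
    have h2 := dvd_sub_pow_of_dvd_sub h1 1
    rw [pow_one] at h2
    have h3 : b ^ p - (-c) ^ p = b ^ p + c ^ p := by rw [hodd.neg_pow]; ring
    rw [h3] at h2
    exact_mod_cast h2
  -- p^2 ∣ 2 Z
  have hp2Z : (p : ℤ) ^ 2 ∣ Z * 2 := by
    have h1 : Z * 2 = (b ^ p + c ^ p) - s := by rw [← hb, ← hc, hs]; ring
    rw [h1]
    exact dvd_sub hp2bc hp2s
  -- conclude
  have hpprime : Prime ((p : ℤ)) := Nat.prime_iff_prime_int.mp hp
  have hcop2 : IsCoprime ((p : ℤ)) 2 := by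
    rw [Prime.coprime_iff_not_dvd hpprime]
    intro h
    have := Int.le_of_dvd (by norm_num) h
    omega
  exact (IsCoprime.pow_left hcop2 : IsCoprime ((p : ℤ) ^ 2) 2).dvd_of_dvd_mul_right hp2Z

/-- Sophie Germain's Theorem: if there is an auxiliary prime θ satisfying
Condition N-C (no two nonzero consecutive p-th power residues mod θ) and
Condition p-N-p (p is not a p-th power residue mod θ), then in any solution
of the Fermat equation with pairwise coprime nonzero integers, p² divides
one of x, y, z. -/
theorem sophie_germain_theorem
    (p θ : ℕ) (hp : p.Prime) (hpodd : Odd p) (hθ : θ.Prime)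
    (hNC : ¬ ∃ a b : ℤ, ¬ (θ : ℤ) ∣ a ∧ ¬ (θ : ℤ) ∣ b ∧ b ^ p ≡ a ^ p + 1 [ZMOD (θ : ℤ)])
    (hpNp : ¬ ∃ c : ℤ, c ^ p ≡ (p : ℤ) [ZMOD (θ : ℤ)])
    (x y z : ℤ) (hx : x ≠ 0) (hy : y ≠ 0) (hz : z ≠ 0)
    (hxy : IsCoprime x y) (hyz : IsCoprime y z) (hxz : IsCoprime x z)
    (hfermat : x ^ p + y ^ p = z ^ p) :
    (p : ℤ) ^ 2 ∣ x ∨ (p : ℤ) ^ 2 ∣ y ∨ (p : ℤ) ^ 2 ∣ z := by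
  haveI : Fact θ.Prime := ⟨hθ⟩
  -- translate hypotheses to ZMod θ
  have hNC' : ∀ u v : ZMod θ, u ≠ 0 → v ≠ 0 → v ^ p ≠ u ^ p + 1 := by
    intro u v hu hv hvp
    apply hNC
    refine ⟨(ZMod.cast u : ℤ), (ZMod.cast v : ℤ), ?_, ?_, ?_⟩
    · rw [← ZMod.intCast_zmod_eq_zero_iff_dvd, ZMod.intCast_zmod_cast]
      exact hu
    · rw [← ZMod.intCast_zmod_eq_zero_iff_dvd, ZMod.intCast_zmod_cast]
      exact hv
    · have := ZMod.intCast_eq_intCast_iff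
        ((ZMod.cast v : ℤ) ^ p) ((ZMod.cast u : ℤ) ^ p + 1) θ
      rw [← this]
      push_cast
      exact hvp
  have hpNp' : ∀ w : ZMod θ, w ^ p ≠ (p : ZMod θ) := by
    intro w hw
    apply hpNp
    refine ⟨(ZMod.cast w : ℤ), ?_⟩
    have := ZMod.intCast_eq_intCast_iff ((ZMod.cast w : ℤ) ^ p) ((p : ℤ)) θ
    rw [← this]
    push_cast
    exact hw
  -- symmetric form
  have hz' : (-z) ≠ 0 := neg_ne_zero.mpr hz
  have hyz' : IsCoprime y (-z) := hyz.neg_right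
  have hxz' : IsCoprime x (-z) := hxz.neg_right
  have heq : x ^ p + y ^ p + (-z) ^ p = 0 := by
    rw [hpodd.neg_pow]; linarith
  by_cases hpx : (p : ℤ) ∣ x
  · left
    exact claim2 p hp hpodd y (-z) x hy hz' hx hyz' (hxz'.symm) (hxy.symm)
      (by linarith) hpx
  by_cases hpy : (p : ℤ) ∣ y
  · right; left
    exact claim2 p hp hpodd (-z) x y hz' hx hy (hxz'.symm) (hxy) (hyz'.symm)
      (by linarith) hpy
  by_cases hpz : (p : ℤ) ∣ (-z)
  · right; right
    have h2 := claim2 p hp hpodd x y (-z) hx hy hz' hxy hyz' hxz' heq hpz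
    rwa [dvd_neg] at h2
  exfalso
  -- θ divides one of x, y, -z
  have hθd : (θ : ℤ) ∣ x ∨ (θ : ℤ) ∣ y ∨ (θ : ℤ) ∣ z := by
    by_contra h
    push_neg at h
    obtain ⟨h1, h2, h3⟩ := h
    have hx0 : ((x : ZMod θ)) ≠ 0 := fun hh => h1 ((ZMod.intCast_zmod_eq_zero_iff_dvd x θ).mp hh)
    have hy0 : ((y : ZMod θ)) ≠ 0 := fun hh => h2 ((ZMod.intCast_zmod_eq_zero_iff_dvd y θ).mp hh)
    have hz0 : ((z : ZMod θ)) ≠ 0 := fun hh => h3 ((ZMod.intCast_zmod_eq_zero_iff_dvd z θ).mp hh)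
    have hcast : ((x : ZMod θ)) ^ p + ((y : ZMod θ)) ^ p = ((z : ZMod θ)) ^ p := by
      have hq : ((x ^ p + y ^ p : ℤ) : ZMod θ) = ((z ^ p : ℤ) : ZMod θ) := by rw [hfermat]
      push_cast at hq
      exact hq
    have hyp0 : ((y : ZMod θ)) ^ p ≠ 0 := pow_ne_zero p hy0
    apply hNC' ((x : ZMod θ) / (y : ZMod θ)) ((z : ZMod θ) / (y : ZMod θ))
      (div_ne_zero hx0 hy0) (div_ne_zero hz0 hy0)
    rw [div_pow, div_pow, ← hcast]
    field_simp
  rcases hθd with h | h | h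
  · exact claim1_aux p θ hp hpodd hNC' hpNp' y (-z) x hy hz' hx hyz'
      (hxz'.symm) (hxy.symm) (by linarith) hpy hpz hpx h
  · exact claim1_aux p θ hp hpodd hNC' hpNp' (-z) x y hz' hx hy (hxz'.symm)
      hxy (hyz'.symm) (by linarith) hpz hpx hpy h
  · exact claim1_aux p θ hp hpodd hNC' hpNp' x y (-z) hx hy hz' hxy hyz' hxz'
      heq hpx hpy hpz (dvd_neg.mpr h)
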